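/- If U, V₁, V₂ are independent random variables each uniformly distributed on [0,1], then Cov(|U - V₁|, |U - V₂|) = 1/180. -/

import Mathlib

open MeasureTheory ProbabilityTheory intervalIntegral

lemma absInt (u : ℝ) (hu : u ∈ Set.Icc (0:ℝ) 1) :
    ∫ v in Set.Icc (0:ℝ) 1, |u - v| = u^2 - u + 1/2 := by
  obtain ⟨h0, h1⟩ := hu
  rw [MeasureTheory.integral_Icc_eq_integral_Ioc,
    ← integral_of_le (by norm_num : (0:ℝ) ≤ 1)]
  have hc : ∀ a b : ℝ, IntervalIntegrable (fun v => |u - v|) volume a b :=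
    fun a b => (continuous_const.sub continuous_id).abs.intervalIntegrable a b
  rw [← integral_add_adjacent_intervals (hc 0 u) (hc u 1)]
  have e1 : ∫ v in (0:ℝ)..u, |u - v| = ∫ v in (0:ℝ)..u, (u - v) := by
    apply integral_congr
    intro v hv
    rw [Set.uIcc_of_le h0] at hv
    exact abs_of_nonneg (by linarith [hv.2])
  have e2 : ∫ v in u..(1:ℝ), |u - v| = ∫ v in u..(1:ℝ), (v - u) := by
    apply integral_congr
    intro v hv
    rw [Set.uIcc_of_le h1] at hv
    simp only
    rw [abs_sub_comm]
    exact abs_of_nonneg (by linarith [hv.1])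
  rw [e1, e2]
  rw [integral_sub (_root_.intervalIntegrable_const) intervalIntegrable_id,
    integral_sub intervalIntegrable_id _root_.intervalIntegrable_const]
  simp [integral_id]
  ring

lemma intB : ∫ u in Set.Icc (0:ℝ) 1, (u^2 - u + 1/2) = 1/3 := by
  rw [MeasureTheory.integral_Icc_eq_integral_Ioc,
    ← integral_of_le (by norm_num : (0:ℝ) ≤ 1)]
  norm_num [_root_.intervalIntegral.integral_add, _root_.intervalIntegral.integral_sub,
    integral_pow, intervalIntegrable_id,
    integral_id,
    (continuous_pow 2).intervalIntegrable, _root_.intervalIntegrable_const]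

lemma intC : ∫ u in Set.Icc (0:ℝ) 1, (u^2 - u + 1/2)^2 = 7/60 := by
  rw [MeasureTheory.integral_Icc_eq_integral_Ioc,
    ← integral_of_le (by norm_num : (0:ℝ) ≤ 1)]
  have : ∀ u : ℝ, (u^2 - u + 1/2)^2 = u^4 - 2*u^3 + 2*u^2 - u + 1/4 := by intro u; ring
  simp_rw [this]
  have h4 : IntervalIntegrable (fun x : ℝ => x ^ 4) volume 0 1 := (continuous_pow 4).intervalIntegrable _ _
  have h3 : IntervalIntegrable (fun x : ℝ => 2 * x ^ 3) volume 0 1 := ((continuous_pow 3).const_mul 2).intervalIntegrable _ _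
  have h2 : IntervalIntegrable (fun x : ℝ => 2 * x ^ 2) volume 0 1 := ((continuous_pow 2).const_mul 2).intervalIntegrable _ _
  rw [intervalIntegral.integral_add ((h4.sub h3).add h2 |>.sub intervalIntegrable_id) intervalIntegrable_const,
    intervalIntegral.integral_sub ((h4.sub h3).add h2) intervalIntegrable_id,
    intervalIntegral.integral_add (h4.sub h3) h2, intervalIntegral.integral_sub h4 h3,
    intervalIntegral.integral_const_mul, intervalIntegral.integral_const_mul]
  norm_num [integral_pow, integral_id]

theorem cov_abs_sub_shared_uniform
    {Ω : Type*} [MeasureSpace Ω] [IsProbabilityMeasure (ℙ : Measure Ω)]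
    (U V₁ V₂ : Ω → ℝ) (hU : Measurable U) (hV₁ : Measurable V₁) (hV₂ : Measurable V₂)
    (hInd : iIndepFun ![U, V₁, V₂] ℙ)
    (hUunif : Measure.map U ℙ = volume.restrict (Set.Icc (0:ℝ) 1))
    (hV₁unif : Measure.map V₁ ℙ = volume.restrict (Set.Icc (0:ℝ) 1))
    (hV₂unif : Measure.map V₂ ℙ = volume.restrict (Set.Icc (0:ℝ) 1)) :
    (∫ ω, |U ω - V₁ ω| * |U ω - V₂ ω| ∂ℙ)
      - (∫ ω, |U ω - V₁ ω| ∂ℙ) * (∫ ω, |U ω - V₂ ω| ∂ℙ) = 1/180 := by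
  set μ : Measure ℝ := volume.restrict (Set.Icc (0:ℝ) 1) with hμ
  haveI : IsProbabilityMeasure μ := by
    constructor
    rw [hμ, Measure.restrict_apply_univ, Real.volume_Icc]
    norm_num
  have hmeas : ∀ i, Measurable (![U, V₁, V₂] i) := by
    intro i; fin_cases i <;> simpa using ‹_›
  have hI12 : IndepFun V₁ V₂ ℙ := hInd.indepFun (i := 1) (j := 2) (by decide)
  have hU1 : IndepFun U V₁ ℙ := hInd.indepFun (i := 0) (j := 1) (by decide)
  have hU2 : IndepFun U V₂ ℙ := hInd.indepFun (i := 0) (j := 2) (by decide)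
  have hUV : IndepFun U (fun ω => (V₁ ω, V₂ ω)) ℙ :=
    (hInd.indepFun_prodMk hmeas 1 2 0 (by decide) (by decide)).symm
  -- map measures
  have m1 : Measure.map (fun ω => (U ω, V₁ ω)) ℙ = μ.prod μ := by
    rw [(indepFun_iff_map_prod_eq_prod_map_map hU.aemeasurable hV₁.aemeasurable).mp hU1,
      hUunif, hV₁unif]
  have m2 : Measure.map (fun ω => (U ω, V₂ ω)) ℙ = μ.prod μ := by
    rw [(indepFun_iff_map_prod_eq_prod_map_map hU.aemeasurable hV₂.aemeasurable).mp hU2,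
      hUunif, hV₂unif]
  have mV : Measure.map (fun ω => (V₁ ω, V₂ ω)) ℙ = μ.prod μ := by
    rw [(indepFun_iff_map_prod_eq_prod_map_map hV₁.aemeasurable hV₂.aemeasurable).mp hI12,
      hV₁unif, hV₂unif]
  have m3 : Measure.map (fun ω => (U ω, (V₁ ω, V₂ ω))) ℙ = μ.prod (μ.prod μ) := by
    rw [(indepFun_iff_map_prod_eq_prod_map_map hU.aemeasurable
      (hV₁.prodMk hV₂).aemeasurable).mp hUV, hUunif, mV]
  -- continuity
  have hg : Continuous (fun p : ℝ × ℝ => |p.1 - p.2|) :=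
    (continuous_fst.sub continuous_snd).abs
  have hg3 : Continuous (fun p : ℝ × (ℝ × ℝ) => |p.1 - p.2.1| * |p.1 - p.2.2|) :=
    ((continuous_fst.sub (continuous_fst.comp continuous_snd)).abs).mul
      ((continuous_fst.sub (continuous_snd.comp continuous_snd)).abs)
  -- integrability on product
  have hint2 : Integrable (fun p : ℝ × ℝ => |p.1 - p.2|) (μ.prod μ) := by
    rw [hμ, Measure.prod_restrict]
    exact hg.continuousOn.integrableOn_compact (isCompact_Icc.prod isCompact_Icc)
  have hint3 : Integrable (fun p : ℝ × (ℝ × ℝ) => |p.1 - p.2.1| * |p.1 - p.2.2|)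
      (μ.prod (μ.prod μ)) := by
    rw [hμ, Measure.prod_restrict, Measure.prod_restrict]
    exact hg3.continuousOn.integrableOn_compact
      (isCompact_Icc.prod (isCompact_Icc.prod isCompact_Icc))
  -- the marginal expectations
  have key1 : (∫ ω, |U ω - V₁ ω| ∂ℙ) = 1/3 := by
    have : (∫ ω, |U ω - V₁ ω| ∂ℙ) = ∫ p : ℝ × ℝ, |p.1 - p.2| ∂(μ.prod μ) := by
      rw [← m1, integral_map (hU.aemeasurable.prodMk hV₁.aemeasurable)
        hg.aestronglyMeasurable]
    rw [this, MeasureTheory.integral_prod _ hint2]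
    rw [show (∫ u, ∫ v, |u - v| ∂μ ∂μ) = ∫ u in Set.Icc (0:ℝ) 1, (u^2 - u + 1/2) from
      setIntegral_congr_fun measurableSet_Icc fun u hu => absInt u hu, intB]
  have key2 : (∫ ω, |U ω - V₂ ω| ∂ℙ) = 1/3 := by
    have : (∫ ω, |U ω - V₂ ω| ∂ℙ) = ∫ p : ℝ × ℝ, |p.1 - p.2| ∂(μ.prod μ) := by
      rw [← m2, integral_map (hU.aemeasurable.prodMk hV₂.aemeasurable)
        hg.aestronglyMeasurable]
    rw [this, MeasureTheory.integral_prod _ hint2]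
    rw [show (∫ u, ∫ v, |u - v| ∂μ ∂μ) = ∫ u in Set.Icc (0:ℝ) 1, (u^2 - u + 1/2) from
      setIntegral_congr_fun measurableSet_Icc fun u hu => absInt u hu, intB]
  have key3 : (∫ ω, |U ω - V₁ ω| * |U ω - V₂ ω| ∂ℙ) = 7/60 := by
    have : (∫ ω, |U ω - V₁ ω| * |U ω - V₂ ω| ∂ℙ)
        = ∫ p : ℝ × (ℝ × ℝ), |p.1 - p.2.1| * |p.1 - p.2.2| ∂(μ.prod (μ.prod μ)) := by
      rw [← m3, integral_map (hU.aemeasurable.prodMk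
        ((hV₁.prodMk hV₂).aemeasurable)) hg3.aestronglyMeasurable]
    rw [this, MeasureTheory.integral_prod _ hint3]
    have inner : ∀ u ∈ Set.Icc (0:ℝ) 1,
        (∫ q : ℝ × ℝ, |u - q.1| * |u - q.2| ∂(μ.prod μ)) = (u^2 - u + 1/2)^2 := by
      intro u hu
      rw [MeasureTheory.integral_prod_mul (fun v => |u - v|) (fun w => |u - w|),
        absInt u hu]
      ring
    rw [show (∫ u, ∫ q : ℝ × ℝ, |u - q.1| * |u - q.2| ∂(μ.prod μ) ∂μ)
        = ∫ u in Set.Icc (0:ℝ) 1, (u^2 - u + 1/2)^2 from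
      setIntegral_congr_fun measurableSet_Icc fun u hu => inner u hu, intC]
  rw [key1, key2, key3]
  norm_num
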